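/- Let m > 0 and let Y : [0,∞) → ℝ be differentiable at every point, with Y(0) < m. Suppose that for every t ≥ 0, if Y(t) < m then Y′(t) ≤ 0. Then Y(t) ≤ Y(0) for all t ≥ 0 (and in particular Y(t) < m for all t ≥ 0). -/

import Mathlib

theorem stmt16 (m : ℝ) (hm : 0 < m) (Y Y' : ℝ → ℝ)
    (hY : ∀ t ∈ Set.Ici (0:ℝ), HasDerivWithinAt Y (Y' t) (Set.Ici 0) t)
    (h0 : Y 0 < m)
    (hdec : ∀ t ∈ Set.Ici (0:ℝ), Y t < m → Y' t ≤ 0) :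
    ∀ t ∈ Set.Ici (0:ℝ), Y t ≤ Y 0 ∧ Y t < m := by
  have hcont : ContinuousOn Y (Set.Ici 0) := fun t ht => (hY t ht).continuousWithinAt
  -- Step 1: Y t < m for all t ≥ 0
  have hlt : ∀ t ∈ Set.Ici (0:ℝ), Y t < m := by
    by_contra hcon
    push_neg at hcon
    obtain ⟨t₀, ht₀, hmt₀⟩ := hcon
    set A : Set ℝ := Set.Ici 0 ∩ Y ⁻¹' Set.Ici m with hA
    have hAne : A.Nonempty := ⟨t₀, ht₀, hmt₀⟩
    have hAclosed : IsClosed A :=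
      hcont.preimage_isClosed_of_isClosed isClosed_Ici isClosed_Ici
    have hAbdd : BddBelow A := ⟨0, fun x hx => hx.1⟩
    set T := sInf A with hT
    have hTmem : T ∈ A := hAclosed.csInf_mem hAne hAbdd
    have hT0 : (0:ℝ) ≤ T := hTmem.1
    have hTm : m ≤ Y T := hTmem.2
    have hlt' : ∀ s, 0 ≤ s → s < T → Y s < m := by
      intro s hs hsT
      by_contra h
      push_neg at h
      exact absurd (csInf_le hAbdd ⟨hs, h⟩) (not_le.2 hsT)
    have hTpos : 0 < T := by
      rcases lt_or_eq_of_le hT0 with h | h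
      · exact h
      · exact absurd hTm (by rw [← h]; exact not_le.2 h0)
    -- Y antitone on [0, T]
    have hanti : AntitoneOn Y (Set.Icc 0 T) := by
      apply antitoneOn_of_hasDerivWithinAt_nonpos (convex_Icc 0 T)
        (hcont.mono (Set.Icc_subset_Ici_self)) (f' := Y')
      · intro x hx
        rw [interior_Icc] at hx
        exact (hY x (le_of_lt hx.1)).mono
          (by rw [interior_Icc]; exact fun y hy => le_of_lt hy.1)
      · intro x hx
        rw [interior_Icc] at hx
        exact hdec x (le_of_lt hx.1) (hlt' x (le_of_lt hx.1) hx.2)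
    have := hanti (Set.left_mem_Icc.2 hT0) (Set.right_mem_Icc.2 hT0) hT0
    linarith
  -- Step 2: Y antitone on Ici 0
  have hanti : AntitoneOn Y (Set.Ici 0) := by
    apply antitoneOn_of_hasDerivWithinAt_nonpos (convex_Ici 0) hcont (f' := Y')
    · intro x hx
      rw [interior_Ici] at hx
      exact (hY x (Set.mem_Ici.2 (le_of_lt (Set.mem_Ioi.1 hx)))).mono
        (by rw [interior_Ici]; exact fun y hy => Set.mem_Ici.2 (le_of_lt (Set.mem_Ioi.1 hy)))
    · intro x hx
      rw [interior_Ici] at hx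
      exact hdec x (Set.mem_Ici.2 (le_of_lt (Set.mem_Ioi.1 hx))) (hlt x (Set.mem_Ici.2 (le_of_lt (Set.mem_Ioi.1 hx))))
  intro t ht
  exact ⟨hanti (Set.mem_Ici.2 le_rfl) ht ht, hlt t ht⟩
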